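/- Assume a < 0 and 4D − T² > 0, and set c = 2π/(D·√(4D − T²)). Let y₀, y₁ ∈ ℝ with y₀ ≥ 0 and y₁ ≤ 0, and suppose ∫_{y₁}^{y₀} (−y)/(Dy² − aTy + a²) dy = cT. Then the number τ = 4π/√(4D − T²) + ∫_{y₁}^{y₀} a/(Dy² − aTy + a²) dy is strictly positive, and there exists a differentiable Ψ = (Ψ₁, Ψ₂) : ℝ → ℝ² with Ψ₁'(t) = TΨ₁(t) − Ψ₂(t) and Ψ₂'(t) = DΨ₁(t) − a for all t, such that Ψ(0) = (0, y₀), Ψ(τ) = (0, y₁), and Ψ₁(t) < 0 for all t ∈ (0, τ); that is, y₁ is the image of y₀ by the left Poincaré half-map of the Liénard system associated to the section {x = 0}, and τ is the corresponding left flight time. -/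

import Mathlib

open Set

lemma polar_aux (x v : ℝ) (hx : 0 < x) :
    Real.sqrt (x^2+v^2) * Real.cos (Real.arctan (v/x)) = x ∧
    Real.sqrt (x^2+v^2) * Real.sin (Real.arctan (v/x)) = v := by
  have hr : Real.sqrt (x^2+v^2) = x * Real.sqrt (1+(v/x)^2) := by
    rw [show (1:ℝ)+(v/x)^2 = (x^2+v^2)/x^2 by field_simp,
      Real.sqrt_div (by positivity), Real.sqrt_sq hx.le]
    field_simp
  have hs : (0:ℝ) < Real.sqrt (1+(v/x)^2) := Real.sqrt_pos.mpr (by positivity)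
  constructor
  · rw [Real.cos_arctan, hr]; field_simp
  · rw [Real.sin_arctan, hr]; field_simp

set_option maxHeartbeats 1000000 in
theorem stmt_16 (a T D : ℝ) (ha : a < 0) (hDT : 0 < 4 * D - T ^ 2)
    (c : ℝ) (hc : c = 2 * Real.pi / (D * Real.sqrt (4 * D - T ^ 2)))
    (y₀ y₁ : ℝ) (hy₀ : 0 ≤ y₀) (hy₁ : y₁ ≤ 0)
    (hF : (∫ y in y₁..y₀, (-y) / (D * y ^ 2 - a * T * y + a ^ 2)) = c * T)
    (τ : ℝ) (hτdef : τ = 4 * Real.pi / Real.sqrt (4 * D - T ^ 2)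
      + ∫ y in y₁..y₀, a / (D * y ^ 2 - a * T * y + a ^ 2)) :
    0 < τ ∧
      ∃ Ψ₁ Ψ₂ : ℝ → ℝ,
        (∀ t : ℝ, HasDerivAt Ψ₁ (T * Ψ₁ t - Ψ₂ t) t) ∧
        (∀ t : ℝ, HasDerivAt Ψ₂ (D * Ψ₁ t - a) t) ∧
        Ψ₁ 0 = 0 ∧ Ψ₂ 0 = y₀ ∧ Ψ₁ τ = 0 ∧ Ψ₂ τ = y₁ ∧
        ∀ t ∈ Ioo 0 τ, Ψ₁ t < 0 := by
  have ha0 : a ≠ 0 := ha.ne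
  have hD : 0 < D := by nlinarith [sq_nonneg T]
  have hD0 : D ≠ 0 := hD.ne'
  obtain ⟨ω, hω, hω2, hsq⟩ : ∃ ω : ℝ, 0 < ω ∧ ω ^ 2 = D - T ^ 2 / 4 ∧
      Real.sqrt (4 * D - T ^ 2) = 2 * ω := by
    refine ⟨Real.sqrt (4 * D - T ^ 2) / 2, by positivity, ?_, by ring⟩
    rw [div_pow, Real.sq_sqrt hDT.le]; ring
  have hω0 : ω ≠ 0 := hω.ne'
  have hVpos : ∀ y : ℝ, 0 < D * y ^ 2 - a * T * y + a ^ 2 := by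
    intro y
    nlinarith [sq_nonneg (2 * D * y - a * T),
      mul_pos (mul_pos (neg_pos.mpr ha) (neg_pos.mpr ha)) hDT]
  set X : ℝ := -a / D with hXdef
  have hX : 0 < X := div_pos (neg_pos.mpr ha) hD
  have haX : a = -(D * X) := by rw [hXdef]; field_simp
  set v₀ : ℝ := (y₀ - a * T / (2 * D)) / ω with hv₀def
  set v₁ : ℝ := (y₁ - a * T / (2 * D)) / ω with hv₁def
  have hv₀m : ω * v₀ = y₀ - a * T / (2 * D) := by rw [hv₀def]; field_simp
  have hv₁m : ω * v₁ = y₁ - a * T / (2 * D) := by rw [hv₁def]; field_simp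
  have hna : (0:ℝ) < -a := neg_pos.mpr ha
  set θ₀ : ℝ := Real.arctan (v₀ / X) with hθ₀def
  set θ₁ : ℝ := Real.arctan (v₁ / X) with hθ₁def
  set r₀ : ℝ := Real.sqrt (X ^ 2 + v₀ ^ 2) with hr₀def
  set r₁ : ℝ := Real.sqrt (X ^ 2 + v₁ ^ 2) with hr₁def
  have hr₀ : 0 < r₀ := Real.sqrt_pos.mpr (by positivity)
  have hr₁ : 0 < r₁ := Real.sqrt_pos.mpr (by positivity)
  have hpc₀ : r₀ * Real.cos θ₀ = X := (polar_aux X v₀ hX).1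
  have hps₀ : r₀ * Real.sin θ₀ = v₀ := (polar_aux X v₀ hX).2
  have hpc₁ : r₁ * Real.cos θ₁ = X := (polar_aux X v₁ hX).1
  have hps₁ : r₁ * Real.sin θ₁ = v₁ := (polar_aux X v₁ hX).2
  have hθ₀u : θ₀ < Real.pi / 2 := Real.arctan_lt_pi_div_two _
  have hθ₀l : -(Real.pi / 2) < θ₀ := Real.neg_pi_div_two_lt_arctan _
  have hθ₁u : θ₁ < Real.pi / 2 := Real.arctan_lt_pi_div_two _
  have hθ₁l : -(Real.pi / 2) < θ₁ := Real.neg_pi_div_two_lt_arctan _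
  -- key polynomial identity
  have hkey : ∀ y : ℝ, a ^ 2 * ω ^ 2 + (D * y - a * T / 2) ^ 2
      = D * (D * y ^ 2 - a * T * y + a ^ 2) := by
    intro y; rw [hω2]; ring
  -- tan inequalities
  have htan₀ : T / (2 * ω) ≤ v₀ / X := by
    have h1 : v₀ / X - T / (2 * ω) = D * y₀ / (-a * ω) := by
      rw [hv₀def, hXdef]; field_simp; ring
    have h2 : 0 ≤ D * y₀ / (-a * ω) := div_nonneg (mul_nonneg hD.le hy₀) (by positivity)
    linarith [h1 ▸ h2]
  have htan₁ : v₁ / X ≤ T / (2 * ω) := by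
    have h1 : T / (2 * ω) - v₁ / X = D * (-y₁) / (-a * ω) := by
      rw [hv₁def, hXdef]; field_simp; ring
    have h2 : 0 ≤ D * (-y₁) / (-a * ω) := div_nonneg (mul_nonneg hD.le (by linarith)) (by positivity)
    linarith [h1 ▸ h2]
  clear_value X v₀ v₁ θ₀ θ₁ r₀ r₁
  -- FTC for ∫ a / V
  have harg : ∀ y : ℝ, (D * y - a * T / 2) / (-a * ω) = ((y - a * T / (2 * D)) / ω) / X := by
    intro y; rw [hXdef]; field_simp
  have hGder : ∀ y : ℝ, HasDerivAt
      (fun y => -(1/ω) * Real.arctan ((D * y - a * T / 2) / (-a * ω)))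
      (a / (D * y ^ 2 - a * T * y + a ^ 2)) y := by
    intro y
    have h1 : HasDerivAt (fun y : ℝ => (D * y - a * T / 2) / (-a * ω)) (D / (-a * ω)) y := by
      simpa using (((hasDerivAt_id y).const_mul D).sub_const (a*T/2)).div_const (-a*ω)
    have h2 := (h1.arctan).const_mul (-(1/ω))
    refine h2.congr_deriv ?_
    have hden : 1 + ((D * y - a * T / 2) / (-a * ω)) ^ 2
        = D * (D * y ^ 2 - a * T * y + a ^ 2) / (a ^ 2 * ω ^ 2) := by
      rw [div_pow, eq_div_iff (by positivity), add_mul, one_mul,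
        div_mul_eq_mul_div, show (-a*ω)^2 = a^2*ω^2 by ring, mul_div_assoc,
        div_self (by positivity), mul_one]
      linear_combination hkey y
    rw [hden, one_div_div]
    have hV' := (hVpos y).ne'
    field_simp
  have hIa : (∫ y in y₁..y₀, a / (D * y ^ 2 - a * T * y + a ^ 2))
      = (θ₁ - θ₀) / ω := by
    rw [intervalIntegral.integral_eq_sub_of_hasDerivAt (fun y _ => hGder y)
      ((continuous_const.div (by fun_prop) (fun y => (hVpos y).ne')).intervalIntegrable _ _)]
    rw [harg y₀, harg y₁, ← hv₀def, ← hv₁def, ← hθ₀def, ← hθ₁def]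
    field_simp
    ring
  -- FTC for ∫ -y / V
  have hHder : ∀ y : ℝ, HasDerivAt
      (fun y => -(1/(2*D)) * Real.log (D * y ^ 2 - a * T * y + a ^ 2)
        + (T/(2*D*ω)) * Real.arctan ((D * y - a * T / 2) / (-a * ω)))
      ((-y) / (D * y ^ 2 - a * T * y + a ^ 2)) y := by
    intro y
    have hV := hVpos y
    have h1 : HasDerivAt (fun y : ℝ => D * y ^ 2 - a * T * y + a ^ 2)
        (2 * D * y - a * T) y := by
      have := (((hasDerivAt_pow 2 y).const_mul D).sub
        (((hasDerivAt_id y).const_mul (a*T)))).add_const (a^2)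
      exact this.congr_deriv (by ring)
    have h2 := (h1.log hV.ne').const_mul (-(1/(2*D)))
    have h3 : HasDerivAt (fun y : ℝ => (D * y - a * T / 2) / (-a * ω)) (D / (-a * ω)) y := by
      simpa using (((hasDerivAt_id y).const_mul D).sub_const (a*T/2)).div_const (-a*ω)
    have h4 := (h3.arctan).const_mul (T/(2*D*ω))
    have h5 := h2.add h4
    refine h5.congr_deriv ?_
    have hden : 1 + ((D * y - a * T / 2) / (-a * ω)) ^ 2
        = D * (D * y ^ 2 - a * T * y + a ^ 2) / (a ^ 2 * ω ^ 2) := by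
      rw [div_pow, eq_div_iff (by positivity), add_mul, one_mul,
        div_mul_eq_mul_div, show (-a*ω)^2 = a^2*ω^2 by ring, mul_div_assoc,
        div_self (by positivity), mul_one]
      linear_combination hkey y
    rw [hden, one_div_div]
    have hV' := hV.ne'
    field_simp
    ring
  have hIF : (∫ y in y₁..y₀, (-y) / (D * y ^ 2 - a * T * y + a ^ 2))
      = -(1/(2*D)) * Real.log (D * y₀ ^ 2 - a * T * y₀ + a ^ 2)
        + (T/(2*D*ω)) * θ₀
        - (-(1/(2*D)) * Real.log (D * y₁ ^ 2 - a * T * y₁ + a ^ 2)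
        + (T/(2*D*ω)) * θ₁) := by
    rw [intervalIntegral.integral_eq_sub_of_hasDerivAt (fun y _ => hHder y)
      ((Continuous.div (by fun_prop) (by fun_prop) (fun y => (hVpos y).ne')).intervalIntegrable _ _)]
    rw [harg y₀, harg y₁, ← hv₀def, ← hv₁def, ← hθ₀def, ← hθ₁def]
  -- the angle identity
  have hωτ : ω * τ = 2 * Real.pi + θ₁ - θ₀ := by
    rw [hτdef, hIa, hsq]
    field_simp
    ring
  have hτ : 0 < τ := by
    have hπ : 0 < Real.pi := Real.pi_pos
    have h1 : 0 < ω * τ := by rw [hωτ]; linarith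
    have h2 : τ = (ω * τ) / ω := by field_simp
    rw [h2]; exact div_pos h1 hω
  -- log relation
  have hDX : D * X = -a := by rw [hXdef]; field_simp
  have hPX : a * T / (2 * D) = -(T * X) / 2 := by rw [hXdef]; field_simp
  have EqF : ω * Real.log (D * y₁ ^ 2 - a * T * y₁ + a ^ 2)
      - ω * Real.log (D * y₀ ^ 2 - a * T * y₀ + a ^ 2) + T * θ₀ - T * θ₁
      = 2 * Real.pi * T := by
    have h := hF
    rw [hIF, hc, hsq] at h
    field_simp at h
    rw [show y₀ * (D * y₀ - a * T) + a ^ 2 = D * y₀ ^ 2 - a * T * y₀ + a ^ 2 by ring,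
      show y₁ * (D * y₁ - a * T) + a ^ 2 = D * y₁ ^ 2 - a * T * y₁ + a ^ 2 by ring] at h
    have h2 : 4 * D ^ 2 * ω * (ω * Real.log (D * y₁ ^ 2 - a * T * y₁ + a ^ 2)
        - ω * Real.log (D * y₀ ^ 2 - a * T * y₀ + a ^ 2) + T * θ₀ - T * θ₁)
        = 4 * D ^ 2 * ω * (2 * Real.pi * T) := by linear_combination 4 * D ^ 2 * ω * h
    exact mul_left_cancel₀ (by positivity) h2
  have hlog : Real.log (D * y₁ ^ 2 - a * T * y₁ + a ^ 2)
      = Real.log (D * y₀ ^ 2 - a * T * y₀ + a ^ 2) + T * τ := by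
    have h3 : ω * (Real.log (D * y₁ ^ 2 - a * T * y₁ + a ^ 2)
        - (Real.log (D * y₀ ^ 2 - a * T * y₀ + a ^ 2) + T * τ)) = 0 := by
      linear_combination EqF - T * hωτ
    have h4 := (mul_eq_zero.mp h3).resolve_left hω0
    linarith [sub_eq_zero.mp h4]
  have hexp : D * y₁ ^ 2 - a * T * y₁ + a ^ 2
      = (D * y₀ ^ 2 - a * T * y₀ + a ^ 2) * Real.exp (T * τ) := by
    have h := congrArg Real.exp hlog
    rwa [Real.exp_log (hVpos y₁), Real.exp_add, Real.exp_log (hVpos y₀)] at h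
  -- V in terms of r
  have hVr₀ : D * y₀ ^ 2 - a * T * y₀ + a ^ 2 = D * ω ^ 2 * (X ^ 2 + v₀ ^ 2) := by
    have e1 : D * (D * ω ^ 2 * (X ^ 2 + v₀ ^ 2))
        = ω ^ 2 * (D * X) ^ 2 + D ^ 2 * (ω * v₀) ^ 2 := by ring
    rw [hDX, hv₀m] at e1
    have e2 : ω ^ 2 * (-a) ^ 2 + D ^ 2 * (y₀ - a * T / (2 * D)) ^ 2
        = D * (D * y₀ ^ 2 - a * T * y₀ + a ^ 2) := by
      rw [hω2]; field_simp; ring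
    exact mul_left_cancel₀ hD0 ((e1.trans e2).symm)
  have hVr₁ : D * y₁ ^ 2 - a * T * y₁ + a ^ 2 = D * ω ^ 2 * (X ^ 2 + v₁ ^ 2) := by
    have e1 : D * (D * ω ^ 2 * (X ^ 2 + v₁ ^ 2))
        = ω ^ 2 * (D * X) ^ 2 + D ^ 2 * (ω * v₁) ^ 2 := by ring
    rw [hDX, hv₁m] at e1
    have e2 : ω ^ 2 * (-a) ^ 2 + D ^ 2 * (y₁ - a * T / (2 * D)) ^ 2
        = D * (D * y₁ ^ 2 - a * T * y₁ + a ^ 2) := by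
      rw [hω2]; field_simp; ring
    exact mul_left_cancel₀ hD0 ((e1.trans e2).symm)
  have hsum : X ^ 2 + v₁ ^ 2 = (X ^ 2 + v₀ ^ 2) * Real.exp (T * τ) := by
    have h5 : D * ω ^ 2 * (X ^ 2 + v₁ ^ 2)
        = D * ω ^ 2 * ((X ^ 2 + v₀ ^ 2) * Real.exp (T * τ)) := by
      linear_combination hexp - hVr₁ + Real.exp (T * τ) * hVr₀
    exact mul_left_cancel₀ (by positivity) h5
  have hE2 : Real.exp (T * τ / 2) ^ 2 = Real.exp (T * τ) := by
    rw [sq, ← Real.exp_add]; congr 1; ring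
  have hrr : r₁ = r₀ * Real.exp (T * τ / 2) := by
    have hr₀sq : r₀ ^ 2 = X ^ 2 + v₀ ^ 2 := by
      rw [hr₀def]; exact Real.sq_sqrt (by positivity)
    have h6 : X ^ 2 + v₁ ^ 2 = (r₀ * Real.exp (T * τ / 2)) ^ 2 := by
      rw [mul_pow, hr₀sq, hE2, hsum]
    rw [hr₁def, h6, Real.sqrt_sq (by positivity)]
  clear hF hτdef hc hIF hIa hGder hHder harg hkey EqF hlog hexp hVr₀ hVr₁ hsum hVpos hsq
  -- the solution
  set Ψ₁ : ℝ → ℝ := fun t => -X + Real.exp (T * t / 2)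
    * (X * Real.cos (ω * t) - v₀ * Real.sin (ω * t)) with hΨ₁def
  set W : ℝ → ℝ := fun t => Real.exp (T * t / 2)
    * (ω * (v₀ * Real.cos (ω * t) + X * Real.sin (ω * t))) with hWdef
  set Ψ₂ : ℝ → ℝ := fun t => W t + ((T / 2) * Ψ₁ t + a * T / (2 * D)) with hΨ₂def
  have hE : ∀ t : ℝ, HasDerivAt (fun s : ℝ => Real.exp (T * s / 2))
      (Real.exp (T * t / 2) * (T / 2)) t := by
    intro t
    have h : HasDerivAt (fun s : ℝ => T * s / 2) (T / 2) t := by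
      simpa using ((hasDerivAt_id t).const_mul T).div_const 2
    exact h.exp
  have hlin : ∀ t : ℝ, HasDerivAt (fun s : ℝ => ω * s) ω t := by
    intro t; simpa using (hasDerivAt_id t).const_mul ω
  have hu : ∀ t : ℝ, HasDerivAt
      (fun s : ℝ => Real.exp (T * s / 2) * (X * Real.cos (ω * s) - v₀ * Real.sin (ω * s)))
      (Real.exp (T * t / 2) * ((T / 2) * (X * Real.cos (ω * t) - v₀ * Real.sin (ω * t))
        - ω * (X * Real.sin (ω * t) + v₀ * Real.cos (ω * t)))) t := by
    intro t
    have h := (hE t).mul ((((hlin t).cos).const_mul X).sub (((hlin t).sin).const_mul v₀))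
    exact h.congr_deriv (by simp only [Pi.sub_apply]; ring)
  have hWd : ∀ t : ℝ, HasDerivAt W
      (Real.exp (T * t / 2) * ((T / 2) * (ω * (v₀ * Real.cos (ω * t) + X * Real.sin (ω * t)))
        + ω ^ 2 * (X * Real.cos (ω * t) - v₀ * Real.sin (ω * t)))) t := by
    intro t
    have h := (hE t).mul (((((hlin t).cos).const_mul v₀).add
      (((hlin t).sin).const_mul X)).const_mul ω)
    rw [hWdef]
    exact h.congr_deriv (by simp only [Pi.add_apply]; ring)
  have hΨ₁d : ∀ t : ℝ, HasDerivAt Ψ₁ (T * Ψ₁ t - Ψ₂ t) t := by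
    intro t
    have h := (hu t).const_add (-X)
    simp only [hΨ₁def, hΨ₂def, hWdef]
    rw [hPX]
    refine h.congr_deriv ?_
    ring
  have hΨ₂d : ∀ t : ℝ, HasDerivAt Ψ₂ (D * Ψ₁ t - a) t := by
    intro t
    have h := (hWd t).add (((hΨ₁d t).const_mul (T / 2)).add_const (a * T / (2 * D)))
    rw [hΨ₂def]
    refine h.congr_deriv ?_
    symm
    simp only [hΨ₂def, hΨ₁def, hWdef]
    rw [hPX]
    linear_combination (-(Real.exp (T * t / 2)
      * (X * Real.cos (ω * t) - v₀ * Real.sin (ω * t)))) * hω2 - haX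
  have hΨ₁0 : Ψ₁ 0 = 0 := by simp [hΨ₁def]
  have hΨ₂0 : Ψ₂ 0 = y₀ := by
    simp only [hΨ₂def, hΨ₁def, hWdef]
    simp
    linear_combination hv₀m
  have hcosτ : Real.cos (ω * τ) = Real.cos (θ₁ - θ₀) := by
    rw [hωτ, show 2 * Real.pi + θ₁ - θ₀ = (θ₁ - θ₀) + 2 * Real.pi by ring,
      Real.cos_add_two_pi]
  have hsinτ : Real.sin (ω * τ) = Real.sin (θ₁ - θ₀) := by
    rw [hωτ, show 2 * Real.pi + θ₁ - θ₀ = (θ₁ - θ₀) + 2 * Real.pi by ring,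
      Real.sin_add_two_pi]
  have hXc : X * Real.cos (ω * τ) - v₀ * Real.sin (ω * τ) = r₀ * Real.cos θ₁ := by
    rw [hcosτ, hsinτ, ← hpc₀, ← hps₀,
      show θ₁ = (θ₁ - θ₀) + θ₀ by ring, Real.cos_add]
    ring
  have hXs : v₀ * Real.cos (ω * τ) + X * Real.sin (ω * τ) = r₀ * Real.sin θ₁ := by
    rw [hcosτ, hsinτ, ← hpc₀, ← hps₀,
      show θ₁ = (θ₁ - θ₀) + θ₀ by ring, Real.sin_add]
    ring
  have hΨ₁τ : Ψ₁ τ = 0 := by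
    simp only [hΨ₁def]
    rw [hXc, show Real.exp (T * τ / 2) * (r₀ * Real.cos θ₁)
      = (r₀ * Real.exp (T * τ / 2)) * Real.cos θ₁ by ring, ← hrr, hpc₁]
    ring
  have hΨ₂τ : Ψ₂ τ = y₁ := by
    simp only [hΨ₂def]
    rw [hΨ₁τ]
    simp only [hWdef]
    rw [hXs, show Real.exp (T * τ / 2) * (ω * (r₀ * Real.sin θ₁))
      = ω * ((r₀ * Real.exp (T * τ / 2)) * Real.sin θ₁) by ring, ← hrr, hps₁]
    linear_combination hv₁m
  -- negativity
  set g : ℝ → ℝ := fun s => Real.exp (T * s / 2) * Real.cos (ω * s + θ₀) with hgdef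
  have hgd : ∀ s : ℝ, HasDerivAt g
      (Real.exp (T * s / 2) * ((T / 2) * Real.cos (ω * s + θ₀)
        - ω * Real.sin (ω * s + θ₀))) s := by
    intro s
    have hl : HasDerivAt (fun u : ℝ => ω * u + θ₀) ω s := by
      simpa using ((hasDerivAt_id s).const_mul ω).add_const θ₀
    have h := (hE s).mul hl.cos
    rw [hgdef]
    exact h.congr_deriv (by ring)
  have hgc : Continuous g := by rw [hgdef]; fun_prop
  have hg0 : g 0 = Real.cos θ₀ := by simp [hgdef]
  have hgτ : g τ = Real.cos θ₀ := by
    have h1 : g τ = Real.exp (T * τ / 2) * Real.cos θ₁ := by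
      rw [hgdef]
      simp only
      rw [show ω * τ + θ₀ = θ₁ + 2 * Real.pi by linarith [hωτ], Real.cos_add_two_pi]
    have h2 : r₀ * (Real.exp (T * τ / 2) * Real.cos θ₁) = r₀ * Real.cos θ₀ := by
      rw [show r₀ * (Real.exp (T * τ / 2) * Real.cos θ₁)
        = (r₀ * Real.exp (T * τ / 2)) * Real.cos θ₁ by ring, ← hrr, hpc₁, ← hpc₀]
    rw [h1]
    exact mul_left_cancel₀ hr₀.ne' h2
  have hcosθ₀ : 0 < Real.cos θ₀ := Real.cos_pos_of_mem_Ioo ⟨hθ₀l, hθ₀u⟩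
  have htanθ₀ : Real.tan θ₀ = v₀ / X := by rw [hθ₀def, Real.tan_arctan]
  have htanθ₁ : Real.tan θ₁ = v₁ / X := by rw [hθ₁def, Real.tan_arctan]
  have hneg : ∀ t ∈ Ioo (0:ℝ) τ, Ψ₁ t < 0 := by
    intro t ht
    obtain ⟨ht0, htτ⟩ := ht
    suffices hgt : g t < Real.cos θ₀ by
      simp only [hΨ₁def]
      have hXv : X * Real.cos (ω * t) - v₀ * Real.sin (ω * t)
          = r₀ * Real.cos (ω * t + θ₀) := by
        rw [Real.cos_add, ← hpc₀, ← hps₀]; ring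
      rw [hXv, show Real.exp (T * t / 2) * (r₀ * Real.cos (ω * t + θ₀))
        = r₀ * (Real.exp (T * t / 2) * Real.cos (ω * t + θ₀)) by ring]
      have h8 : r₀ * (Real.exp (T * t / 2) * Real.cos (ω * t + θ₀))
          < r₀ * Real.cos θ₀ := by
        apply mul_lt_mul_of_pos_left _ hr₀
        rw [hgdef] at hgt
        exact hgt
      rw [← hpc₀]
      linarith
    rcases le_or_gt (Real.cos (ω * t + θ₀)) 0 with hcos | hcos
    · have h9 : g t ≤ 0 := by
        rw [hgdef]
        exact mul_nonpos_of_nonneg_of_nonpos (Real.exp_nonneg _) hcos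
      linarith
    · have hωt : 0 < ω * t := mul_pos hω ht0
      have hωt2 : ω * t < ω * τ := by exact mul_lt_mul_of_pos_left htτ hω
      have hrange2 : ω * t + θ₀ < 2 * Real.pi + θ₁ := by
        rw [hωτ] at hωt2; linarith
      rcases lt_or_ge (ω * t + θ₀) (Real.pi / 2) with hA | hB
      · -- decreasing branch
        have hanti : StrictAntiOn g (Icc 0 t) := by
          apply strictAntiOn_of_deriv_neg (convex_Icc 0 t) hgc.continuousOn
          intro s hs
          rw [interior_Icc] at hs
          rw [(hgd s).deriv]
          have hωs1 : 0 < ω * s := mul_pos hω hs.1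
          have hωs2 : ω * s < ω * t := mul_lt_mul_of_pos_left hs.2 hω
          have hφu : ω * s + θ₀ < Real.pi / 2 := by linarith
          have hφl : θ₀ < ω * s + θ₀ := by linarith
          have hφcos : 0 < Real.cos (ω * s + θ₀) :=
            Real.cos_pos_of_mem_Ioo ⟨by linarith, hφu⟩
          have htano : Real.tan θ₀ < Real.tan (ω * s + θ₀) :=
            Real.strictMonoOn_tan ⟨hθ₀l, hθ₀u⟩ ⟨by linarith, hφu⟩ hφl
          rw [htanθ₀, Real.tan_eq_sin_div_cos] at htano
          have h10 : T / (2 * ω) < Real.sin (ω * s + θ₀) / Real.cos (ω * s + θ₀) :=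
            lt_of_le_of_lt htan₀ htano
          have h11 : T / (2 * ω) * Real.cos (ω * s + θ₀) < Real.sin (ω * s + θ₀) :=
            (lt_div_iff₀ hφcos).mp h10
          apply mul_neg_of_pos_of_neg (Real.exp_pos _)
          have h15 := mul_lt_mul_of_pos_left h11 hω
          have h16 : ω * (T / (2 * ω) * Real.cos (ω * s + θ₀))
              = T / 2 * Real.cos (ω * s + θ₀) := by field_simp
          rw [h16] at h15
          linarith
        have h13 := hanti (show (0:ℝ) ∈ Icc 0 t from ⟨le_rfl, ht0.le⟩)
          (show t ∈ Icc 0 t from ⟨ht0.le, le_rfl⟩) ht0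
        rw [hg0] at h13
        exact h13
      · -- increasing branch
        have h32 : 3 * Real.pi / 2 < ω * t + θ₀ := by
          by_contra hle
          push_neg at hle
          have := Real.cos_nonpos_of_pi_div_two_le_of_le hB (by linarith)
          linarith
        have hmono : StrictMonoOn g (Icc t τ) := by
          apply strictMonoOn_of_deriv_pos (convex_Icc t τ) hgc.continuousOn
          intro s hs
          rw [interior_Icc] at hs
          rw [(hgd s).deriv]
          have hωs1 : ω * t < ω * s := mul_lt_mul_of_pos_left hs.1 hω
          have hωs2 : ω * s < ω * τ := mul_lt_mul_of_pos_left hs.2 hω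
          have hφl : 3 * Real.pi / 2 < ω * s + θ₀ := by linarith
          have hφu : ω * s + θ₀ < 2 * Real.pi + θ₁ := by rw [hωτ] at hωs2; linarith
          have hcs : Real.cos (ω * s + θ₀) = Real.cos (ω * s + θ₀ - 2 * Real.pi) := by
            rw [show ω * s + θ₀ = (ω * s + θ₀ - 2 * Real.pi) + 2 * Real.pi by ring,
              Real.cos_add_two_pi]
            ring_nf
          have hss : Real.sin (ω * s + θ₀) = Real.sin (ω * s + θ₀ - 2 * Real.pi) := by
            rw [show ω * s + θ₀ = (ω * s + θ₀ - 2 * Real.pi) + 2 * Real.pi by ring,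
              Real.sin_add_two_pi]
            ring_nf
          set ψ := ω * s + θ₀ - 2 * Real.pi with hψdef
          have hψl : -(Real.pi / 2) < ψ := by rw [hψdef]; linarith
          have hψu : ψ < θ₁ := by rw [hψdef]; linarith
          have hψcos : 0 < Real.cos ψ :=
            Real.cos_pos_of_mem_Ioo ⟨hψl, by linarith⟩
          have htano : Real.tan ψ < Real.tan θ₁ :=
            Real.strictMonoOn_tan ⟨hψl, by linarith⟩ ⟨hθ₁l, hθ₁u⟩ hψu
          rw [htanθ₁, Real.tan_eq_sin_div_cos] at htano
          have h10 : Real.sin ψ / Real.cos ψ < T / (2 * ω) :=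
            lt_of_lt_of_le htano htan₁
          have h11 : Real.sin ψ < T / (2 * ω) * Real.cos ψ :=
            (div_lt_iff₀ hψcos).mp h10
          rw [hcs, hss]
          apply mul_pos (Real.exp_pos _)
          have h15 := mul_lt_mul_of_pos_left h11 hω
          have h16 : ω * (T / (2 * ω) * Real.cos ψ) = T / 2 * Real.cos ψ := by
            field_simp
          rw [h16] at h15
          linarith
        have h13 := hmono (show t ∈ Icc t τ from ⟨le_rfl, htτ.le⟩)
          (show τ ∈ Icc t τ from ⟨htτ.le, le_rfl⟩) htτ
        rw [hgτ] at h13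
        exact h13
  exact ⟨hτ, Ψ₁, Ψ₂, hΨ₁d, hΨ₂d, hΨ₁0, hΨ₂0, hΨ₁τ, hΨ₂τ, hneg⟩
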